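/- (Theorem 7.1, Case 2) Let i, j, k be integers with i ≤ 0, j ≥ 0, k ≥ 0, i + j ≤ 0, i + k ≤ 0 and i + j + k ≥ 0, and let ℓ = −(i + j + k). Then the symmetrized coefficient Z_{ijkℓ} = (1/6)(N_{ijkℓ} + N_{ikjℓ} + N_{jikℓ} + N_{jkiℓ} + N_{kijℓ} + N_{kjiℓ}) equals P₂(i, j, k) = (1/90)(h(i, j, k) + h(i, k, j)), where h(i, j, k) = 5i⁵ + 25i⁴j + 10i³j² + 20i³jk − 10i²j³ − 15ij⁴ − 20ij³k − 4j⁵ − 5j⁴k + 10j³k² − 5i³ − 15i²j + 5ij² − 5j²k + 4j. -/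

import Mathlib

set_option linter.unusedVariables false

/-- `N_{j₁j₂j₃j₄} = Σ_{n∈ℤ} (|f(n)| − f(n))` with
`f(n) = n(n+j₁)(n+j₁+j₂)(n+j₁+j₂+j₃)` (a finite sum). -/
noncomputable def N4 (j₁ j₂ j₃ j₄ : ℤ) : ℤ :=
  ∑ᶠ n : ℤ, (|n * (n + j₁) * (n + j₁ + j₂) * (n + j₁ + j₂ + j₃)|
    - n * (n + j₁) * (n + j₁ + j₂) * (n + j₁ + j₂ + j₃))

/-- The polynomial `h` of Theorem 7.1, Case 2. -/
def hPoly (i j k : ℤ) : ℤ :=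
  5 * i ^ 5 + 25 * i ^ 4 * j + 10 * i ^ 3 * j ^ 2 + 20 * i ^ 3 * j * k
    - 10 * i ^ 2 * j ^ 3 - 15 * i * j ^ 4 - 20 * i * j ^ 3 * k
    - 4 * j ^ 5 - 5 * j ^ 4 * k + 10 * j ^ 3 * k ^ 2
    - 5 * i ^ 3 - 15 * i ^ 2 * j + 5 * i * j ^ 2 - 5 * j ^ 2 * k + 4 * j

private lemma int_mul_nn_of_np_np {x y : ℤ} (hx : x ≤ 0) (hy : y ≤ 0) : 0 ≤ x * y := by
  nlinarith

/-- Antiderivative of `(x-a)(x-b)(x-c)(x-d)` for summation. -/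
def FF (a b c d x : ℚ) : ℚ :=
  x * (x+1) * (2*x+1) * (3*x^2 + 3*x - 1) / 30
    - (a+b+c+d) * (x*(x+1)/2)^2
    + (a*b + a*c + a*d + b*c + b*d + c*d) * (x*(x+1)*(2*x+1)/6)
    - (a*b*c + a*b*d + a*c*d + b*c*d) * (x*(x+1)/2)
    + (a*b*c*d) * x

lemma FF_step (a b c d x : ℚ) :
    FF a b c d x - FF a b c d (x-1) = (x-a)*(x-b)*(x-c)*(x-d) := by
  simp only [FF]; ring

lemma sum_Icc_f (a b c d : ℚ) (p q : ℤ) (h : p ≤ q) :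
    (∑ n ∈ Finset.Icc p q, (((n:ℚ)-a)*((n:ℚ)-b)*((n:ℚ)-c)*((n:ℚ)-d)))
      = FF a b c d (q:ℚ) - FF a b c d ((p:ℚ)-1) := by
  refine Int.le_induction (motive := fun q _ => (∑ n ∈ Finset.Icc p q,
      (((n:ℚ)-a)*((n:ℚ)-b)*((n:ℚ)-c)*((n:ℚ)-d)))
      = FF a b c d (q:ℚ) - FF a b c d ((p:ℚ)-1)) ?_ ?_ q h
  · beta_reduce
    rw [Finset.Icc_self, Finset.sum_singleton]
    linear_combination -FF_step a b c d (p:ℚ)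
  · intro q hq ih
    beta_reduce at ih ⊢
    have hins : Finset.Icc p (q+1) = insert (q+1) (Finset.Icc p q) := by
      ext x; simp only [Finset.mem_Icc, Finset.mem_insert]; omega
    rw [hins, Finset.sum_insert (by simp only [Finset.mem_Icc]; omega), ih]
    have hstep := FF_step a b c d ((q:ℚ)+1)
    rw [show ((q:ℚ)+1-1) = (q:ℚ) by ring] at hstep
    push_cast
    linear_combination -hstep

lemma key (r1 r2 r3 r4 : ℤ) (h12 : r1 ≤ r2) (h23 : r2 ≤ r3) (h34 : r3 ≤ r4) :
    (∑ᶠ n : ℤ, (|(n-r1)*(n-r2)*(n-r3)*(n-r4)| - (n-r1)*(n-r2)*(n-r3)*(n-r4)))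
      = -2 * ((∑ n ∈ Finset.Icc r1 r2, (n-r1)*(n-r2)*(n-r3)*(n-r4))
            + (∑ n ∈ Finset.Icc r3 r4, (n-r1)*(n-r2)*(n-r3)*(n-r4))) := by
  set f : ℤ → ℤ := fun n => (n-r1)*(n-r2)*(n-r3)*(n-r4) with hf
  set g : ℤ → ℤ := fun n => |f n| - f n with hg
  have hsupp : Function.support g ⊆ ((Finset.Ioo r1 r2 ∪ Finset.Ioo r3 r4 : Finset ℤ) : Set ℤ) := by
    intro n hn
    by_contra hmem
    simp only [Finset.coe_union, Set.mem_union, Finset.coe_Ioo, Set.mem_Ioo, not_or,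
      not_and_or, not_lt] at hmem
    apply hn
    have hfn : 0 ≤ f n := by
      rcases le_or_gt n r1 with h | h
      · have h1 : 0 ≤ (n-r1)*(n-r2) := int_mul_nn_of_np_np (by omega) (by omega)
        have h2 : 0 ≤ (n-r3)*(n-r4) := int_mul_nn_of_np_np (by omega) (by omega)
        calc (0:ℤ) ≤ ((n-r1)*(n-r2))*((n-r3)*(n-r4)) := mul_nonneg h1 h2
          _ = f n := by simp only [hf]; ring
      · rcases le_or_gt r4 n with h' | h'
        · have h1 : 0 ≤ (n-r1)*(n-r2) := mul_nonneg (by omega) (by omega)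
          have h2 : 0 ≤ (n-r3)*(n-r4) := mul_nonneg (by omega) (by omega)
          calc (0:ℤ) ≤ ((n-r1)*(n-r2))*((n-r3)*(n-r4)) := mul_nonneg h1 h2
            _ = f n := by simp only [hf]; ring
        · -- middle: r2 ≤ n ≤ r3
          have hn2 : r2 ≤ n := by
            rcases hmem.1 with h1 | h1
            · omega
            · exact h1
          have hn3 : n ≤ r3 := by
            rcases hmem.2 with h2 | h2
            · exact h2
            · omega
          have h1 : 0 ≤ (n-r1)*(n-r2) := mul_nonneg (by omega) (by omega)
          have h2 : 0 ≤ (n-r3)*(n-r4) := int_mul_nn_of_np_np (by omega) (by omega)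
          calc (0:ℤ) ≤ ((n-r1)*(n-r2))*((n-r3)*(n-r4)) := mul_nonneg h1 h2
            _ = f n := by simp only [hf]; ring
    show g n = 0
    rw [hg]
    simp [abs_of_nonneg hfn]
  have hdisj : Disjoint (Finset.Ioo r1 r2) (Finset.Ioo r3 r4) := by
    rw [Finset.disjoint_left]
    intro a ha hb
    simp only [Finset.mem_Ioo] at ha hb
    omega
  have hmain : (∑ᶠ n : ℤ, g n) = ∑ n ∈ Finset.Ioo r1 r2 ∪ Finset.Ioo r3 r4, g n :=
    finsum_eq_finset_sum_of_support_subset g hsupp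
  rw [hmain, Finset.sum_union hdisj]
  have hneg1 : ∀ n ∈ Finset.Ioo r1 r2, g n = -2 * f n := by
    intro n hn
    simp only [Finset.mem_Ioo] at hn
    have hx : 0 < n - r1 := by omega
    have hy : n - r2 < 0 := by omega
    have hz : n - r3 < 0 := by omega
    have hw : n - r4 < 0 := by omega
    have hfn : f n < 0 := by
      have h1 : 0 < (n-r2)*(n-r3) := mul_pos_of_neg_of_neg hy hz
      have h2 : 0 < (n-r1)*((n-r2)*(n-r3)) := mul_pos hx h1
      calc f n = ((n-r1)*((n-r2)*(n-r3)))*(n-r4) := by simp only [hf]; ring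
        _ < 0 := mul_neg_of_pos_of_neg h2 hw
    rw [hg]; simp only [abs_of_neg hfn]; ring
  have hneg2 : ∀ n ∈ Finset.Ioo r3 r4, g n = -2 * f n := by
    intro n hn
    simp only [Finset.mem_Ioo] at hn
    have hx : 0 < n - r1 := by omega
    have hy : 0 < n - r2 := by omega
    have hz : 0 < n - r3 := by omega
    have hw : n - r4 < 0 := by omega
    have hfn : f n < 0 := by
      have h2 : 0 < (n-r1)*(n-r2)*(n-r3) := mul_pos (mul_pos hx hy) hz
      calc f n = ((n-r1)*(n-r2)*(n-r3))*(n-r4) := by simp only [hf]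
        _ < 0 := mul_neg_of_pos_of_neg h2 hw
    rw [hg]; simp only [abs_of_neg hfn]; ring
  rw [Finset.sum_congr rfl hneg1, Finset.sum_congr rfl hneg2]
  have hext1 : (∑ n ∈ Finset.Ioo r1 r2, (-2) * f n) = ∑ n ∈ Finset.Icc r1 r2, (-2) * f n := by
    apply Finset.sum_subset Finset.Ioo_subset_Icc_self
    intro x hx hnx
    simp only [Finset.mem_Icc] at hx
    simp only [Finset.mem_Ioo, not_and_or, not_lt] at hnx
    have : x = r1 ∨ x = r2 := by omega
    rcases this with rfl | rfl <;> · simp only [hf]; ring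
  have hext2 : (∑ n ∈ Finset.Ioo r3 r4, (-2) * f n) = ∑ n ∈ Finset.Icc r3 r4, (-2) * f n := by
    apply Finset.sum_subset Finset.Ioo_subset_Icc_self
    intro x hx hnx
    simp only [Finset.mem_Icc] at hx
    simp only [Finset.mem_Ioo, not_and_or, not_lt] at hnx
    have : x = r3 ∨ x = r4 := by omega
    rcases this with rfl | rfl <;> · simp only [hf]; ring
  rw [hext1, hext2, ← Finset.mul_sum, ← Finset.mul_sum]
  ring

lemma key' (r1 r2 r3 r4 : ℤ) (h12 : r1 ≤ r2) (h23 : r2 ≤ r3) (h34 : r3 ≤ r4) :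
    ((∑ᶠ n : ℤ, (|(n-r1)*(n-r2)*(n-r3)*(n-r4)| - (n-r1)*(n-r2)*(n-r3)*(n-r4)) : ℤ) : ℚ)
      = -2 * ((FF r1 r2 r3 r4 (r2:ℚ) - FF r1 r2 r3 r4 ((r1:ℚ)-1))
            + (FF r1 r2 r3 r4 (r4:ℚ) - FF r1 r2 r3 r4 ((r3:ℚ)-1))) := by
  rw [key r1 r2 r3 r4 h12 h23 h34]
  push_cast
  rw [sum_Icc_f (r1:ℚ) (r2:ℚ) (r3:ℚ) (r4:ℚ) r1 r2 h12,
    sum_Icc_f (r1:ℚ) (r2:ℚ) (r3:ℚ) (r4:ℚ) r3 r4 h34]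

/-- Theorem 7.1, Case 2: for `i ≤ 0`, `j, k ≥ 0`, `i+j ≤ 0`, `i+k ≤ 0`,
`i+j+k ≥ 0` and `ℓ = −(i+j+k)`, the symmetrized coefficient
`Z_{ijkℓ} = (1/6)(N_{ijkℓ}+N_{ikjℓ}+N_{jikℓ}+N_{jkiℓ}+N_{kijℓ}+N_{kjiℓ})`
equals `P₂(i,j,k) = (1/90)(h(i,j,k) + h(i,k,j))`. -/
theorem zetaCoef_case2 (i j k : ℤ) (hi : i ≤ 0) (hj : 0 ≤ j) (hk : 0 ≤ k)
    (hij : i + j ≤ 0) (hik : i + k ≤ 0) (hijk : 0 ≤ i + j + k)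
    (l : ℤ) (hl : l = -(i + j + k)) :
    ((N4 i j k l + N4 i k j l + N4 j i k l + N4 j k i l + N4 k i j l
        + N4 k j i l : ℤ) : ℚ) / 6
      = (1 / 90) * ((hPoly i j k + hPoly i k j : ℤ) : ℚ) := by
  subst hl
  -- perm (i,j,k): sorted roots -(i+j+k), 0, -(i+j), -i
  have e1 : N4 i j k (-(i+j+k)) = ∑ᶠ n : ℤ,
      (|(n - (-(i+j+k)))*(n - 0)*(n - (-(i+j)))*(n - (-i))|
        - (n - (-(i+j+k)))*(n - 0)*(n - (-(i+j)))*(n - (-i))) := by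
    unfold N4
    exact finsum_congr fun n => by
      rw [show n * (n + i) * (n + i + j) * (n + i + j + k)
        = (n - (-(i+j+k)))*(n - 0)*(n - (-(i+j)))*(n - (-i)) from by ring]
  have e2 : N4 i k j (-(i+j+k)) = ∑ᶠ n : ℤ,
      (|(n - (-(i+j+k)))*(n - 0)*(n - (-(i+k)))*(n - (-i))|
        - (n - (-(i+j+k)))*(n - 0)*(n - (-(i+k)))*(n - (-i))) := by
    unfold N4
    exact finsum_congr fun n => by
      rw [show n * (n + i) * (n + i + k) * (n + i + k + j)
        = (n - (-(i+j+k)))*(n - 0)*(n - (-(i+k)))*(n - (-i)) from by ring]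
  have e3 : N4 j i k (-(i+j+k)) = ∑ᶠ n : ℤ,
      (|(n - (-j))*(n - (-(i+j+k)))*(n - 0)*(n - (-(i+j)))|
        - (n - (-j))*(n - (-(i+j+k)))*(n - 0)*(n - (-(i+j)))) := by
    unfold N4
    exact finsum_congr fun n => by
      rw [show n * (n + j) * (n + j + i) * (n + j + i + k)
        = (n - (-j))*(n - (-(i+j+k)))*(n - 0)*(n - (-(i+j))) from by ring]
  have e4 : N4 j k i (-(i+j+k)) = ∑ᶠ n : ℤ,
      (|(n - (-(j+k)))*(n - (-j))*(n - (-(i+j+k)))*(n - 0)|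
        - (n - (-(j+k)))*(n - (-j))*(n - (-(i+j+k)))*(n - 0)) := by
    unfold N4
    exact finsum_congr fun n => by
      rw [show n * (n + j) * (n + j + k) * (n + j + k + i)
        = (n - (-(j+k)))*(n - (-j))*(n - (-(i+j+k)))*(n - 0) from by ring]
  have e5 : N4 k i j (-(i+j+k)) = ∑ᶠ n : ℤ,
      (|(n - (-k))*(n - (-(i+j+k)))*(n - 0)*(n - (-(i+k)))|
        - (n - (-k))*(n - (-(i+j+k)))*(n - 0)*(n - (-(i+k)))) := by
    unfold N4
    exact finsum_congr fun n => by
      rw [show n * (n + k) * (n + k + i) * (n + k + i + j)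
        = (n - (-k))*(n - (-(i+j+k)))*(n - 0)*(n - (-(i+k))) from by ring]
  have e6 : N4 k j i (-(i+j+k)) = ∑ᶠ n : ℤ,
      (|(n - (-(j+k)))*(n - (-k))*(n - (-(i+j+k)))*(n - 0)|
        - (n - (-(j+k)))*(n - (-k))*(n - (-(i+j+k)))*(n - 0)) := by
    unfold N4
    exact finsum_congr fun n => by
      rw [show n * (n + k) * (n + k + j) * (n + k + j + i)
        = (n - (-(j+k)))*(n - (-k))*(n - (-(i+j+k)))*(n - 0) from by ring]
  have E1 := key' (-(i+j+k)) 0 (-(i+j)) (-i) (by omega) (by omega) (by omega)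
  have E2 := key' (-(i+j+k)) 0 (-(i+k)) (-i) (by omega) (by omega) (by omega)
  have E3 := key' (-j) (-(i+j+k)) 0 (-(i+j)) (by omega) (by omega) (by omega)
  have E4 := key' (-(j+k)) (-j) (-(i+j+k)) 0 (by omega) (by omega) (by omega)
  have E5 := key' (-k) (-(i+j+k)) 0 (-(i+k)) (by omega) (by omega) (by omega)
  have E6 := key' (-(j+k)) (-k) (-(i+j+k)) 0 (by omega) (by omega) (by omega)
  push_cast
  rw [e1, e2, e3, e4, e5, e6, E1, E2, E3, E4, E5, E6]
  simp only [FF, hPoly]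
  push_cast
  ring
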